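/- Let θ > 0 and let ν0, μ be Borel probability measures on [0,1]. For a finite Borel partition j = (B_1,…,B_r) of [0,1], let I^θ_{π_j(ν0)}(π_j(μ)) denote the finite-dimensional rate function θ Σ_{i: ν0(B_i)>0} ν0(B_i) log(ν0(B_i)/μ(B_i)) if every i with μ(B_i) > 0 satisfies ν0(B_i) > 0, and +∞ otherwise (a summand being +∞ when ν0(B_i) > 0 = μ(B_i)). Then sup over all finite Borel partitions j of [0,1] of I^θ_{π_j(ν0)}(π_j(μ)) equals I^θ_{ν0}(μ), where I^θ_{ν0}(μ) = θ H(ν0|μ) if μ ≪ ν0 and +∞ otherwise. -/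

import Mathlib

open MeasureTheory
open scoped ENNReal NNReal Classical

/-- The relative entropy `H(μ|ν) = ∫ log (dμ/dν) dμ` if `μ ≪ ν`, and `+∞` otherwise. -/
noncomputable def relEnt {α : Type*} [MeasurableSpace α] (μ ν : Measure α) : EReal :=
  if μ ≪ ν then
    ((∫⁻ x, ENNReal.ofReal (llr μ ν x) ∂μ : ℝ≥0∞) : EReal)
      - ((∫⁻ x, ENNReal.ofReal (-llr μ ν x) ∂μ : ℝ≥0∞) : EReal)
  else ⊤

/-- The finite-dimensional rate function along a finite partition `B`:
`θ ∑_{i : ν₀(Bᵢ)>0} ν₀(Bᵢ) log(ν₀(Bᵢ)/μ(Bᵢ))` if every `i` with `μ(Bᵢ) > 0` has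
`ν₀(Bᵢ) > 0`, and `+∞` otherwise (a summand being `+∞` when `ν₀(Bᵢ) > 0 = μ(Bᵢ)`). -/
noncomputable def fdRate {α : Type*} [MeasurableSpace α] (θ : ℝ)
    (ν₀ μ : Measure α) {r : ℕ} (B : Fin r → Set α) : EReal :=
  if ∀ i, 0 < μ (B i) → 0 < ν₀ (B i) then
    (θ : EReal) * ∑ i, (if ν₀ (B i) = 0 then (0 : EReal)
      else if μ (B i) = 0 then (⊤ : EReal)
      else (((ν₀ (B i)).toReal * Real.log ((ν₀ (B i)).toReal / (μ (B i)).toReal) : ℝ)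
        : EReal))
  else ⊤

open Real

section Aux

variable {α : Type*} [MeasurableSpace α] {ν μ : Measure α}

lemma ereal_coe_ennreal_eq (b : ℝ≥0∞) (hb : b ≠ ⊤) : (b : EReal) = ((b.toReal : ℝ) : EReal) := by
  conv_lhs => rw [← ENNReal.ofReal_toReal hb]
  rw [EReal.coe_ennreal_ofReal, max_eq_left ENNReal.toReal_nonneg]

-- u * exp(-u) ≤ s * exp(-s) for 1 ≤ s ≤ u

lemma mul_exp_neg_antitone {s u : ℝ} (hs : 1 ≤ s) (hsu : s ≤ u) :
    u * Real.exp (-u) ≤ s * Real.exp (-s) := by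
  have hs0 : 0 < s := lt_of_lt_of_le one_pos hs
  have h1 : u / s ≤ Real.exp (u - s) := by
    have : u / s ≤ 1 + (u - s) := by
      rw [div_le_iff₀ hs0]
      nlinarith
    exact this.trans (by linarith [Real.add_one_le_exp (u - s)])
  have h2 : u ≤ s * Real.exp (u - s) := by
    rw [div_le_iff₀ hs0] at h1; linarith [h1]
  calc u * Real.exp (-u) ≤ (s * Real.exp (u - s)) * Real.exp (-u) :=
        mul_le_mul_of_nonneg_right h2 (Real.exp_nonneg _)
    _ = s * Real.exp (-s) := by rw [mul_assoc, ← Real.exp_add]; ring_nf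

lemma mul_log_ge {s u : ℝ} (hs : 1 ≤ s) (hu : 0 < u) (hus : u ≤ Real.exp (-s)) :
    -(s * Real.exp (-s)) ≤ u * Real.log u := by
  set w := -Real.log u with hw
  have huw : u = Real.exp (-w) := by rw [hw, neg_neg, Real.exp_log hu]
  have hws : s ≤ w := by
    have := Real.log_le_log hu hus
    rw [Real.log_exp] at this
    simp only [hw]; linarith
  have := mul_exp_neg_antitone hs hws
  have hlog : u * Real.log u = -(w * Real.exp (-w)) := by
    rw [huw, Real.log_exp]; ring
  rw [hlog]; linarith

lemma lintegral_neg_llr_le (hνμ : ν ≪ μ) [IsFiniteMeasure μ] [SigmaFinite ν] :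
    ∫⁻ x, ENNReal.ofReal (-llr ν μ x) ∂ν ≤ μ Set.univ := by
  have hmeas : AEMeasurable (fun x => ENNReal.ofReal (-llr ν μ x)) μ :=
    ((measurable_llr ν μ).neg.ennreal_ofReal).aemeasurable
  rw [← lintegral_rnDeriv_mul hνμ hmeas]
  calc ∫⁻ x, ν.rnDeriv μ x * ENNReal.ofReal (-llr ν μ x) ∂μ
      ≤ ∫⁻ _, 1 ∂μ := by
        apply lintegral_mono_ae
        filter_upwards [Measure.rnDeriv_lt_top ν μ] with x hx
        rcases eq_or_ne (ν.rnDeriv μ x) 0 with h0 | h0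
        · simp [h0]
        · set t := (ν.rnDeriv μ x).toReal with ht
          have htpos : 0 < t := ENNReal.toReal_pos h0 hx.ne
          have hrw : ν.rnDeriv μ x = ENNReal.ofReal t := (ENNReal.ofReal_toReal hx.ne).symm
          rw [hrw, ← ENNReal.ofReal_mul htpos.le]
          rcases le_or_gt (-llr ν μ x) 0 with hneg | hpos
          · calc ENNReal.ofReal (t * -llr ν μ x) ≤ ENNReal.ofReal 0 :=
                  ENNReal.ofReal_le_ofReal (by nlinarith)
              _ ≤ 1 := by simp
          · have : -llr ν μ x = Real.log t⁻¹ := by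
              simp [llr, Real.log_inv, ht]
            rw [this]
            have h2 : Real.log t⁻¹ ≤ t⁻¹ - 1 := Real.log_le_sub_one_of_pos (by positivity)
            have h3 : t * Real.log t⁻¹ ≤ 1 - t := by
              have := mul_le_mul_of_nonneg_left h2 htpos.le
              rwa [mul_sub, mul_inv_cancel₀ htpos.ne', mul_one] at this
            calc ENNReal.ofReal (t * Real.log t⁻¹) ≤ ENNReal.ofReal 1 :=
                  ENNReal.ofReal_le_ofReal (by linarith)
              _ = 1 := ENNReal.ofReal_one
    _ = μ Set.univ := by simp

lemma ereal_coe_fsum {ι : Type*} (s : Finset ι) (f : ι → ℝ) :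
    ((∑ i ∈ s, f i : ℝ) : EReal) = ∑ i ∈ s, (f i : EReal) :=
  map_sum (⟨⟨(↑), EReal.coe_zero⟩, EReal.coe_add⟩ : ℝ →+ EReal) f s

lemma max_sub_max_neg (a : ℝ) : max a 0 - max (-a) 0 = a := by
  rcases le_total a 0 with h | h
  · simp [max_eq_right h, max_eq_left (neg_nonneg.mpr h)]
  · simp [max_eq_left h, max_eq_right (neg_nonpos.mpr h)]

lemma pair_admissible {t : Set α} (ht : MeasurableSet t) :
    (∀ i, MeasurableSet (![t, tᶜ] i)) ∧ Pairwise (Function.onFun Disjoint ![t, tᶜ]) ∧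
      (⋃ i, ![t, tᶜ] i) = Set.univ := by
  refine ⟨?_, ?_, ?_⟩
  · intro i; fin_cases i
    · exact ht
    · exact ht.compl
  · intro i j hij
    fin_cases i <;> fin_cases j <;>
      simp_all [Function.onFun, disjoint_compl_right, disjoint_compl_left]
  · apply Set.eq_univ_of_forall
    intro x
    by_cases hx : x ∈ t
    · exact Set.mem_iUnion.mpr ⟨0, hx⟩
    · exact Set.mem_iUnion.mpr ⟨1, hx⟩

section Core
variable [IsProbabilityMeasure ν] [IsProbabilityMeasure μ]

lemma lintegral_neg_llr_le' (hνμ : ν ≪ μ) :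
    ∫⁻ x, ENNReal.ofReal (-llr ν μ x) ∂ν ≤ 1 :=
  (measure_univ (μ := μ)) ▸ lintegral_neg_llr_le hνμ

lemma cell_lower (hμν : μ ≪ ν) (hνμ : ν ≪ μ) {s : Set α} (hs : MeasurableSet s) (a : ℝ)
    (h : ∀ x ∈ s, a ≤ llr ν μ x) :
    ENNReal.ofReal (Real.exp a) * μ s ≤ ν s := by
  rw [← Measure.setLIntegral_rnDeriv' hνμ hs, ← setLIntegral_const s _]
  apply lintegral_mono_ae
  filter_upwards [ae_restrict_of_ae (Measure.rnDeriv_pos' hμν),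
    ae_restrict_of_ae (Measure.rnDeriv_lt_top ν μ), ae_restrict_mem hs] with x hpos hlt hmem
  have htpos : 0 < (ν.rnDeriv μ x).toReal := ENNReal.toReal_pos hpos.ne' hlt.ne
  have : Real.exp a ≤ (ν.rnDeriv μ x).toReal :=
    (Real.le_log_iff_exp_le htpos).mp (h x hmem)
  exact ENNReal.ofReal_le_of_le_toReal this

lemma cell_upper (hμν : μ ≪ ν) (hνμ : ν ≪ μ) {s : Set α} (hs : MeasurableSet s) (a : ℝ)
    (h : ∀ x ∈ s, llr ν μ x ≤ a) :
    ν s ≤ ENNReal.ofReal (Real.exp a) * μ s := by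
  rw [← Measure.setLIntegral_rnDeriv' hνμ hs, ← setLIntegral_const s _]
  apply lintegral_mono_ae
  filter_upwards [ae_restrict_of_ae (Measure.rnDeriv_pos' hμν),
    ae_restrict_of_ae (Measure.rnDeriv_lt_top ν μ), ae_restrict_mem hs] with x hpos hlt hmem
  have htpos : 0 < (ν.rnDeriv μ x).toReal := ENNReal.toReal_pos hpos.ne' hlt.ne
  have h1 : (ν.rnDeriv μ x).toReal ≤ Real.exp a :=
    (Real.log_le_iff_le_exp htpos).mp (h x hmem)
  calc ν.rnDeriv μ x = ENNReal.ofReal (ν.rnDeriv μ x).toReal :=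
        (ENNReal.ofReal_toReal hlt.ne).symm
    _ ≤ ENNReal.ofReal (Real.exp a) := ENNReal.ofReal_le_ofReal h1

lemma term_lower (hμν : μ ≪ ν) (hνμ : ν ≪ μ) {s : Set α} (hs : MeasurableSet s) (a : ℝ)
    (h : ∀ x ∈ s, a ≤ llr ν μ x) (hνs : ν s ≠ 0) :
    a * (ν s).toReal ≤ (ν s).toReal * Real.log ((ν s).toReal / (μ s).toReal) := by
  have hμs : μ s ≠ 0 := fun h0 => hνs (hνμ h0)
  have hbpos : 0 < (μ s).toReal := ENNReal.toReal_pos hμs (measure_ne_top μ s)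
  have hupos : 0 < (ν s).toReal := ENNReal.toReal_pos hνs (measure_ne_top ν s)
  have h1 := cell_lower hμν hνμ hs a h
  have h2 : Real.exp a * (μ s).toReal ≤ (ν s).toReal := by
    have := ENNReal.toReal_mono (measure_ne_top ν s) h1
    rwa [ENNReal.toReal_mul, ENNReal.toReal_ofReal (Real.exp_nonneg a)] at this
  have h3 : Real.exp a ≤ (ν s).toReal / (μ s).toReal := (le_div_iff₀ hbpos).mpr h2
  have h4 : a ≤ Real.log ((ν s).toReal / (μ s).toReal) :=
    (Real.le_log_iff_exp_le (div_pos hupos hbpos)).mpr h3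
  calc a * (ν s).toReal ≤ Real.log ((ν s).toReal / (μ s).toReal) * (ν s).toReal :=
        mul_le_mul_of_nonneg_right h4 hupos.le
    _ = _ := mul_comm _ _

lemma term_bottom (hμν : μ ≪ ν) (hνμ : ν ≪ μ) {s : Set α} (hs : MeasurableSet s) {n : ℝ}
    (hn : 1 ≤ n) (h : ∀ x ∈ s, llr ν μ x ≤ -n) (hνs : ν s ≠ 0) :
    -(n * Real.exp (-n)) ≤ (ν s).toReal * Real.log ((ν s).toReal / (μ s).toReal) := by
  have hμs : μ s ≠ 0 := fun h0 => hνs (hνμ h0)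
  have hbpos : 0 < (μ s).toReal := ENNReal.toReal_pos hμs (measure_ne_top μ s)
  have hb1 : (μ s).toReal ≤ 1 := by
    simpa using ENNReal.toReal_mono (by simp) (prob_le_one (μ := μ) (s := s))
  have hupos : 0 < (ν s).toReal := ENNReal.toReal_pos hνs (measure_ne_top ν s)
  have h1 := cell_upper hμν hνμ hs (-n) h
  have h2 : (ν s).toReal ≤ Real.exp (-n) * (μ s).toReal := by
    have := ENNReal.toReal_mono (by finiteness) h1
    rwa [ENNReal.toReal_mul, ENNReal.toReal_ofReal (Real.exp_nonneg _)] at this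
  have h2' : (ν s).toReal ≤ Real.exp (-n) := h2.trans (by nlinarith [Real.exp_nonneg (-n)])
  have h3 : (ν s).toReal ≤ (ν s).toReal / (μ s).toReal := by
    rw [le_div_iff₀ hbpos]; nlinarith
  have h4 : Real.log (ν s).toReal ≤ Real.log ((ν s).toReal / (μ s).toReal) :=
    Real.log_le_log hupos h3
  calc -(n * Real.exp (-n)) ≤ (ν s).toReal * Real.log (ν s).toReal :=
        mul_log_ge hn hupos h2'
    _ ≤ _ := mul_le_mul_of_nonneg_left h4 hupos.le

lemma neg_llr_ne_top (hνμ : ν ≪ μ) : ∫⁻ x, ENNReal.ofReal (-llr ν μ x) ∂ν ≠ ⊤ :=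
  fun h => by simpa [h] using lintegral_neg_llr_le (μ := μ) hνμ

lemma integrable_llr_of (hνμ : ν ≪ μ)
    (hP : ∫⁻ x, ENNReal.ofReal (llr ν μ x) ∂ν ≠ ⊤) : Integrable (llr ν μ) ν := by
  refine ⟨(stronglyMeasurable_llr ν μ).aestronglyMeasurable, ?_⟩
  rw [hasFiniteIntegral_iff_norm]
  have hle : ∀ x, ENNReal.ofReal ‖llr ν μ x‖ ≤
      ENNReal.ofReal (llr ν μ x) + ENNReal.ofReal (-llr ν μ x) := by
    intro x
    rcases le_or_gt 0 (llr ν μ x) with h | h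
    · rw [Real.norm_eq_abs, abs_of_nonneg h]; exact le_add_right le_rfl
    · rw [Real.norm_eq_abs, abs_of_neg h]; exact le_add_left le_rfl
  calc ∫⁻ x, ENNReal.ofReal ‖llr ν μ x‖ ∂ν
      ≤ ∫⁻ x, (ENNReal.ofReal (llr ν μ x) + ENNReal.ofReal (-llr ν μ x)) ∂ν :=
        lintegral_mono hle
    _ = ∫⁻ x, ENNReal.ofReal (llr ν μ x) ∂ν + ∫⁻ x, ENNReal.ofReal (-llr ν μ x) ∂ν :=
        lintegral_add_left (measurable_llr ν μ).ennreal_ofReal _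
    _ < ⊤ := ENNReal.add_lt_top.mpr ⟨hP.lt_top, (neg_llr_ne_top hνμ).lt_top⟩

lemma relEnt_eq_top (hνμ : ν ≪ μ)
    (hP : ∫⁻ x, ENNReal.ofReal (llr ν μ x) ∂ν = ⊤) : relEnt ν μ = ⊤ := by
  rw [relEnt, if_pos hνμ, hP, EReal.coe_ennreal_top,
    ereal_coe_ennreal_eq _ (neg_llr_ne_top hνμ), EReal.top_sub_coe]

lemma relEnt_eq_int (hνμ : ν ≪ μ)
    (hP : ∫⁻ x, ENNReal.ofReal (llr ν μ x) ∂ν ≠ ⊤) :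
    relEnt ν μ = ((∫ x, llr ν μ x ∂ν : ℝ) : EReal) := by
  rw [relEnt, if_pos hνμ,
    integral_eq_lintegral_pos_part_sub_lintegral_neg_part (integrable_llr_of hνμ hP),
    ereal_coe_ennreal_eq _ hP, ereal_coe_ennreal_eq _ (neg_llr_ne_top hνμ), EReal.coe_sub]

lemma integrableOn_inv_rnDeriv (hνμ : ν ≪ μ) {s : Set α} (hs : MeasurableSet s) :
    IntegrableOn (fun x => (ν.rnDeriv μ x).toReal⁻¹) s ν ∧
      ∫ x in s, (ν.rnDeriv μ x).toReal⁻¹ ∂ν ≤ (μ s).toReal := by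
  have hmeas : Measurable fun x => (ν.rnDeriv μ x).toReal⁻¹ :=
    (Measure.measurable_rnDeriv ν μ).ennreal_toReal.inv
  have hlint : ∫⁻ x in s, ENNReal.ofReal ((ν.rnDeriv μ x).toReal⁻¹) ∂ν ≤ μ s := by
    rw [← setLIntegral_rnDeriv_mul hνμ
      hmeas.ennreal_ofReal.aemeasurable hs]
    calc ∫⁻ x in s, ν.rnDeriv μ x * ENNReal.ofReal ((ν.rnDeriv μ x).toReal⁻¹) ∂μ
        ≤ ∫⁻ _ in s, 1 ∂μ := by
          apply lintegral_mono_ae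
          filter_upwards [ae_restrict_of_ae (Measure.rnDeriv_lt_top ν μ)] with x hlt
          rcases eq_or_ne (ν.rnDeriv μ x) 0 with h0 | h0
          · simp [h0]
          · have htpos : 0 < (ν.rnDeriv μ x).toReal := ENNReal.toReal_pos h0 hlt.ne
            calc ν.rnDeriv μ x * ENNReal.ofReal ((ν.rnDeriv μ x).toReal⁻¹)
                = ENNReal.ofReal ((ν.rnDeriv μ x).toReal) *
                    ENNReal.ofReal ((ν.rnDeriv μ x).toReal⁻¹) := by
                  rw [ENNReal.ofReal_toReal hlt.ne]
              _ = ENNReal.ofReal ((ν.rnDeriv μ x).toReal * (ν.rnDeriv μ x).toReal⁻¹) :=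
                  (ENNReal.ofReal_mul htpos.le).symm
              _ = 1 := by rw [mul_inv_cancel₀ htpos.ne', ENNReal.ofReal_one]
              _ ≤ 1 := le_rfl
      _ = μ s := by simp
  have hnonneg : (0 : α → ℝ) ≤ᵐ[ν.restrict s] fun x => (ν.rnDeriv μ x).toReal⁻¹ :=
    Filter.Eventually.of_forall fun x => by positivity
  have hint : IntegrableOn (fun x => (ν.rnDeriv μ x).toReal⁻¹) s ν := by
    refine ⟨hmeas.aestronglyMeasurable, ?_⟩
    rw [hasFiniteIntegral_iff_ofReal hnonneg]
    exact lt_of_le_of_lt hlint (measure_lt_top μ s)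
  refine ⟨hint, ?_⟩
  rw [integral_eq_lintegral_of_nonneg_ae hnonneg hmeas.aestronglyMeasurable]
  exact ENNReal.toReal_mono (measure_ne_top μ s) hlint

lemma gibbs (hμν : μ ≪ ν) (hνμ : ν ≪ μ) (hInt : Integrable (llr ν μ) ν) {s : Set α}
    (hs : MeasurableSet s) (hνs : ν s ≠ 0) :
    (ν s).toReal * Real.log ((ν s).toReal / (μ s).toReal) ≤ ∫ x in s, llr ν μ x ∂ν := by
  have hμs : μ s ≠ 0 := fun h0 => hνs (hνμ h0)
  set a := (ν s).toReal with ha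
  set b := (μ s).toReal with hb
  have hapos : 0 < a := ENNReal.toReal_pos hνs (measure_ne_top ν s)
  have hbpos : 0 < b := ENNReal.toReal_pos hμs (measure_ne_top μ s)
  set c := a / b with hc
  have hcpos : 0 < c := div_pos hapos hbpos
  obtain ⟨hinv_int, hinv_le⟩ := integrableOn_inv_rnDeriv (μ := μ) hνμ hs
  have hpt : ∀ᵐ x ∂ν.restrict s,
      Real.log c - llr ν μ x ≤ c * (ν.rnDeriv μ x).toReal⁻¹ - 1 := by
    filter_upwards [ae_restrict_of_ae (hνμ.ae_le (Measure.rnDeriv_pos' hμν)),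
      ae_restrict_of_ae (hνμ.ae_le (Measure.rnDeriv_lt_top ν μ))] with x hpos hlt
    have htpos : 0 < (ν.rnDeriv μ x).toReal := ENNReal.toReal_pos hpos.ne' hlt.ne
    have : Real.log c - llr ν μ x = Real.log (c / (ν.rnDeriv μ x).toReal) := by
      rw [llr, Real.log_div hcpos.ne' htpos.ne']
    rw [this, div_eq_mul_inv]
    exact Real.log_le_sub_one_of_pos (by positivity)
  have hL : IntegrableOn (fun x => Real.log c - llr ν μ x) s ν :=
    (integrableOn_const (measure_lt_top ν s).ne).sub hInt.integrableOn
  have hR : IntegrableOn (fun x => c * (ν.rnDeriv μ x).toReal⁻¹ - 1) s ν :=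
    (hinv_int.const_mul c).sub (integrableOn_const (measure_lt_top ν s).ne)
  have hmono := integral_mono_ae hL hR hpt
  rw [integral_sub (show Integrable (fun _ => Real.log c) (ν.restrict s) from
      integrableOn_const (measure_lt_top ν s).ne) hInt.integrableOn,
    integral_sub (hinv_int.const_mul c) (show Integrable (fun _ => (1:ℝ)) (ν.restrict s) from
      integrableOn_const (measure_lt_top ν s).ne),
    setIntegral_const, integral_const_mul, setIntegral_const] at hmono
  simp only [smul_eq_mul, mul_one, measureReal_def, ← ha] at hmono
  have h5 : c * ∫ x in s, (ν.rnDeriv μ x).toReal⁻¹ ∂ν ≤ c * b :=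
    mul_le_mul_of_nonneg_left hinv_le hcpos.le
  have h6 : c * b = a := by rw [hc, div_mul_cancel₀ _ hbpos.ne']
  have : a * Real.log c - ∫ x in s, llr ν μ x ∂ν ≤ 0 := by
    rw [mul_comm]; linarith
  linarith

lemma fdRate_eq (θ : ℝ) (hμν : μ ≪ ν) (hνμ : ν ≪ μ) {r : ℕ} (B : Fin r → Set α) :
    fdRate θ ν μ B = ((θ * ∑ i, (if ν (B i) = 0 then (0:ℝ)
      else (ν (B i)).toReal * Real.log ((ν (B i)).toReal / (μ (B i)).toReal)) : ℝ) : EReal) := by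
  have hcond : ∀ i, 0 < μ (B i) → 0 < ν (B i) := by
    intro i h
    rcases eq_or_ne (ν (B i)) 0 with h0 | h0
    · exact absurd (hμν h0) h.ne'
    · exact pos_iff_ne_zero.mpr h0
  rw [fdRate, if_pos hcond, EReal.coe_mul, ereal_coe_fsum]
  congr 1
  refine Finset.sum_congr rfl fun i _ => ?_
  rcases eq_or_ne (ν (B i)) 0 with h0 | h0
  · simp [h0]
  · rw [if_neg h0, if_neg h0, if_neg (fun hμ0 => h0 (hνμ hμ0))]

lemma fdRate_le (θ : ℝ) (hθ : 0 ≤ θ) (hμν : μ ≪ ν) (hνμ : ν ≪ μ)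
    (hInt : Integrable (llr ν μ) ν) {r : ℕ} (B : Fin r → Set α)
    (hm : ∀ i, MeasurableSet (B i)) (hd : Pairwise (Function.onFun Disjoint B))
    (hc : (⋃ i, B i) = Set.univ) :
    fdRate θ ν μ B ≤ ((θ * ∫ x, llr ν μ x ∂ν : ℝ) : EReal) := by
  rw [fdRate_eq θ hμν hνμ B, EReal.coe_le_coe_iff]
  refine mul_le_mul_of_nonneg_left ?_ hθ
  have h2 : ∫ x, llr ν μ x ∂ν = ∑ i, ∫ x in B i, llr ν μ x ∂ν := by
    rw [← setIntegral_univ, ← hc, integral_iUnion hm hd (hc ▸ hInt.integrableOn),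
      tsum_fintype]
  rw [h2]
  refine Finset.sum_le_sum fun i _ => ?_
  rcases eq_or_ne (ν (B i)) 0 with h0 | h0
  · rw [if_pos h0, ← Measure.restrict_eq_zero] at *
    simp [h0]
  · rw [if_neg h0]
    exact gibbs hμν hνμ hInt (hm i) h0

lemma integrable_neg_part (hνμ : ν ≪ μ) : Integrable (fun x => max (-llr ν μ x) 0) ν := by
  have hmeas : Measurable fun x => max (-llr ν μ x) 0 :=
    (measurable_llr ν μ).neg.max measurable_const
  refine ⟨hmeas.aestronglyMeasurable, ?_⟩
  have h0 : (0 : α → ℝ) ≤ᵐ[ν] fun x => max (-llr ν μ x) 0 :=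
    Filter.Eventually.of_forall fun x => le_max_right _ _
  rw [hasFiniteIntegral_iff_ofReal h0]
  have : ∀ x, ENNReal.ofReal (max (-llr ν μ x) 0) = ENNReal.ofReal (-llr ν μ x) := by
    intro x
    rcases le_total (-llr ν μ x) 0 with h | h
    · rw [max_eq_right h, ENNReal.ofReal_zero, ENNReal.ofReal_of_nonpos h]
    · rw [max_eq_left h]
  simp only [this]
  exact lt_of_le_of_lt (lintegral_neg_llr_le' hνμ) ENNReal.one_lt_top

lemma key_lower (hμν : μ ≪ ν) (hνμ : ν ≪ μ) (n : ℕ) (hn : 1 ≤ n) :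
    ∃ (r : ℕ) (B : Fin r → Set α), (∀ i, MeasurableSet (B i)) ∧
      Pairwise (Function.onFun Disjoint B) ∧ (⋃ i, B i) = Set.univ ∧
      ((∫ x, min (max (llr ν μ x) 0) (n:ℝ) ∂ν) - (∫ x, max (-llr ν μ x) 0 ∂ν)
          - (n:ℝ)⁻¹ - n * Real.exp (-(n:ℝ))
        ≤ ∑ i, (if ν (B i) = 0 then (0:ℝ)
            else (ν (B i)).toReal * Real.log ((ν (B i)).toReal / (μ (B i)).toReal))) := by
  set f := llr ν μ with hf_def
  have hf : Measurable f := measurable_llr ν μ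
  set M : ℕ := n ^ 2 with hM
  set ε : ℝ := (n:ℝ)⁻¹ with hε
  have hnR : (1:ℝ) ≤ (n:ℝ) := by exact_mod_cast hn
  have hnpos : (0:ℝ) < n := by linarith
  have hεpos : 0 < ε := by positivity
  have hMε : (M:ℝ) * ε = n := by
    rw [hM, hε]; push_cast; field_simp
  -- the indexing function
  set h : ℤ → Fin (2 * M + 2) := fun z =>
    ⟨(max (-(M:ℤ) - 1) (min (M:ℤ) z) + M + 1).toNat, by
      have h1 : -(M:ℤ) - 1 ≤ max (-(M:ℤ) - 1) (min (M:ℤ) z) := le_max_left _ _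
      have h2 : max (-(M:ℤ) - 1) (min (M:ℤ) z) ≤ (M:ℤ) :=
        max_le (by omega) (min_le_left _ _)
      omega⟩ with hh
  set K : ℝ → ℤ := fun t => max (-(M:ℤ) - 1) (min (M:ℤ) ⌊t * (n:ℝ)⌋) with hK
  set e : ℝ → Fin (2 * M + 2) := fun t => h ⌊t * (n:ℝ)⌋ with he
  have hKlb : ∀ t, -(M:ℤ) - 1 ≤ K t := fun t => le_max_left _ _
  have hKub : ∀ t, K t ≤ (M:ℤ) := fun t => max_le (by omega) (min_le_left _ _)
  have heval : ∀ t, ((e t : Fin (2*M+2)) : ℕ) = (K t + M + 1).toNat := fun t => rfl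
  have hemeas : Measurable e :=
    (measurable_from_top (f := h)).comp (Int.measurable_floor.comp (measurable_id.mul_const _))
  -- bounds from K
  have hKa : ∀ (t : ℝ) (k : ℤ), K t = k → -(M:ℤ) ≤ k → (k:ℝ) * ε ≤ t := by
    intro t k hk hklb
    have h1 : k ≤ ⌊t * (n:ℝ)⌋ := by
      rcases le_total ⌊t * (n:ℝ)⌋ (M:ℤ) with hc | hc
      · rw [hK] at hk; simp only at hk
        rw [min_eq_right hc] at hk
        rcases le_total (-(M:ℤ) - 1) ⌊t * (n:ℝ)⌋ with hd | hd
        · rw [max_eq_right hd] at hk; omega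
        · rw [max_eq_left hd] at hk; omega
      · rw [hK] at hk; simp only at hk
        rw [min_eq_left hc, max_eq_right (by omega)] at hk; omega
    have h2 : (k:ℝ) ≤ t * n := by exact_mod_cast Int.le_floor.mp h1
    rw [hε, ← div_eq_mul_inv, div_le_iff₀ hnpos]; linarith
  have hKb : ∀ (t : ℝ) (k : ℤ), K t = k → k ≤ (M:ℤ) - 1 → t < ((k:ℝ) + 1) * ε := by
    intro t k hk hkub
    have h1 : ⌊t * (n:ℝ)⌋ ≤ k := by
      rcases le_total ⌊t * (n:ℝ)⌋ (M:ℤ) with hc | hc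
      · rw [hK] at hk; simp only at hk
        rw [min_eq_right hc] at hk
        exact le_trans (le_max_right _ _) hk.le
      · exfalso
        rw [hK] at hk; simp only at hk
        rw [min_eq_left hc, max_eq_right (by omega)] at hk; omega
    have h2 : t * n < (k:ℝ) + 1 := by
      calc t * n < (⌊t * (n:ℝ)⌋ : ℝ) + 1 := Int.lt_floor_add_one _
        _ ≤ (k:ℝ) + 1 := by have := (Int.cast_le (R := ℝ)).mpr h1; linarith
    rw [hε, ← div_eq_mul_inv, lt_div_iff₀ hnpos]; linarith
  -- the partition
  set B : Fin (2 * M + 2) → Set α := fun i => (fun x => e (f x)) ⁻¹' {i} with hB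
  have hBmeas : ∀ i, MeasurableSet (B i) :=
    fun i => (hemeas.comp hf) (measurableSet_singleton i)
  have hBdisj : Pairwise (Function.onFun Disjoint B) := by
    intro i j hij
    simp only [Function.onFun]
    rw [Set.disjoint_left]
    rintro x (hx : e (f x) = i) (hx' : e (f x) = j)
    exact hij (hx ▸ hx')
  have hBcover : (⋃ i, B i) = Set.univ := by
    ext x; simp only [Set.mem_iUnion, Set.mem_univ, iff_true]
    exact ⟨e (f x), rfl⟩
  have hmemK : ∀ (i : Fin (2*M+2)) (x : α), x ∈ B i → K (f x) = (i:ℤ) - (M:ℤ) - 1 := by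
    intro i x hx
    have hval : (K (f x) + M + 1).toNat = (i:ℕ) := by
      have hxe : e (f x) = i := hx
      have := congrArg Fin.val hxe
      rwa [heval] at this
    have := hKlb (f x)
    omega
  set i₀ : Fin (2*M+2) := ⟨0, by omega⟩ with hi₀
  -- the comparison function
  set χ : α → ℝ :=
    fun x => if -(n:ℝ) ≤ f x then min (max (f x) 0) (n:ℝ) - max (-f x) 0 - ε else 0 with hχ
  have hχmeas : Measurable χ := by
    refine Measurable.ite (measurableSet_le measurable_const hf) ?_ measurable_const
    exact (((hf.max measurable_const).min measurable_const).sub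
      (hf.neg.max measurable_const)).sub measurable_const
  have hχbd : ∀ x, ‖χ x‖ ≤ 2*(n:ℝ) + 1 := by
    intro x
    rw [Real.norm_eq_abs]
    rw [hχ]
    simp only
    split
    · rename_i hcc
      have h1 : 0 ≤ min (max (f x) 0) (n:ℝ) := le_min (le_max_right _ _) (by linarith)
      have h2 : min (max (f x) 0) (n:ℝ) ≤ n := min_le_right _ _
      have h3 : (0:ℝ) ≤ max (-f x) 0 := le_max_right _ _
      have h4 : max (-f x) 0 ≤ n := max_le (by linarith) (by linarith)
      have h5 : ε ≤ 1 := by rw [hε]; exact inv_le_one_of_one_le₀ hnR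
      rw [abs_le]; constructor <;> nlinarith
    · rw [abs_zero]; linarith
  have hχint : Integrable χ ν :=
    Integrable.mono' (integrable_const (2*(n:ℝ)+1)) hχmeas.aestronglyMeasurable
      (Filter.Eventually.of_forall hχbd)
  -- per-cell estimate
  have percell : ∀ i : Fin (2*M+2),
      (∫ x in B i, χ x ∂ν) - (if i = i₀ then (n:ℝ) * Real.exp (-(n:ℝ)) else 0)
        ≤ (if ν (B i) = 0 then (0:ℝ)
            else (ν (B i)).toReal * Real.log ((ν (B i)).toReal / (μ (B i)).toReal)) := by
    intro i
    by_cases hi0 : i = i₀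
    · subst hi0
      rw [if_pos rfl]
      have hcell : ∀ x ∈ B i₀, f x < -(n:ℝ) := by
        intro x hx
        have hk := hmemK i₀ x hx
        have hk' : K (f x) = -(M:ℤ) - 1 := by rw [hk]; simp [hi₀]
        have := hKb (f x) _ hk' (by omega)
        have hcast : ((-(M:ℤ) - 1 : ℤ) : ℝ) + 1 = -(M:ℝ) := by push_cast; ring
        rw [hcast] at this
        nlinarith [hMε]
      have hχ0 : Set.EqOn χ 0 (B i₀) := by
        intro x hx
        have := hcell x hx
        simp only [hχ, Pi.zero_apply]
        rw [if_neg (by linarith)]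
      rw [setIntegral_congr_fun (hBmeas i₀) hχ0]
      simp only [integral_zero, Pi.zero_def]
      rcases eq_or_ne (ν (B i₀)) 0 with h0 | h0
      · rw [if_pos h0]
        have : 0 ≤ (n:ℝ) * Real.exp (-(n:ℝ)) := by positivity
        linarith
      · rw [if_neg h0]
        have := term_bottom hμν hνμ (hBmeas i₀) hnR (fun x hx => (hcell x hx).le) h0
        linarith
    · rw [if_neg hi0, sub_zero]
      set k : ℤ := (i:ℤ) - M - 1 with hk_def
      have hival : (i:ℕ) ≠ 0 := by
        intro h
        exact hi0 (Fin.ext (by simp [h, hi₀]))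
      have hk_lb : -(M:ℤ) ≤ k := by have := i.isLt; omega
      have hk_ub : k ≤ (M:ℤ) := by have := i.isLt; omega
      have hflb : ∀ x ∈ B i, (k:ℝ)*ε ≤ f x :=
        fun x hx => hKa _ _ (hmemK i x hx) hk_lb
      have hchi_le : ∀ x ∈ B i, χ x ≤ (k:ℝ)*ε := by
        intro x hx
        rcases eq_or_lt_of_le hk_ub with hkM | hkM
        · have hkεn : (k:ℝ)*ε = n := by
            rw [show ((k:ℤ):ℝ) = ((M:ℕ):ℝ) by exact_mod_cast congrArg (Int.cast : ℤ → ℝ) hkM]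
            exact hMε
          rw [hkεn]
          rw [hχ]; simp only
          split
          · have h2 := min_le_right (max (f x) 0) (n:ℝ)
            have h3 : (0:ℝ) ≤ max (-f x) 0 := le_max_right _ _
            linarith
          · linarith
        · have hfub : f x < ((k:ℝ)+1)*ε := hKb _ _ (hmemK i x hx) (by omega)
          have hfge : -(n:ℝ) ≤ f x := by
            have h1 : (-(M:ℤ):ℝ) * ε ≤ (k:ℝ) * ε :=
              mul_le_mul_of_nonneg_right (by exact_mod_cast hk_lb) hεpos.le
            have h2 := hflb x hx
            have h3 : (-(M:ℤ):ℝ) * ε = -(n:ℝ) := by push_cast; nlinarith [hMε]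
            linarith
          have heq : χ x = min (max (f x) 0) n - max (-f x) 0 - ε := by
            rw [hχ]; simp only; rw [if_pos hfge]
          rw [heq]
          have h2 : min (max (f x) 0) n - max (-f x) 0 ≤ f x := by
            have := max_sub_max_neg (f x)
            have := min_le_left (max (f x) 0) (n:ℝ)
            linarith
          linarith
      have h4 : ∫ x in B i, χ x ∂ν ≤ ((k:ℝ)*ε) * (ν (B i)).toReal := by
        calc ∫ x in B i, χ x ∂ν ≤ ∫ _x in B i, (k:ℝ)*ε ∂ν :=
              setIntegral_mono_on hχint.integrableOn
                (integrableOn_const (measure_lt_top ν (B i)).ne) (hBmeas i) hchi_le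
          _ = (ν (B i)).toReal • ((k:ℝ)*ε) := setIntegral_const _
          _ = ((k:ℝ)*ε) * (ν (B i)).toReal := by rw [smul_eq_mul, mul_comm]
      rcases eq_or_ne (ν (B i)) 0 with h0 | h0
      · rw [if_pos h0]
        rw [Measure.restrict_eq_zero.mpr h0, integral_zero_measure] at h4 ⊢
      · rw [if_neg h0]
        have h5 := term_lower hμν hνμ (hBmeas i) ((k:ℝ)*ε) hflb h0
        linarith
  -- summation
  refine ⟨2 * M + 2, B, hBmeas, hBdisj, hBcover, ?_⟩
  have hsum1 : ∑ i, ∫ x in B i, χ x ∂ν = ∫ x, χ x ∂ν := by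
    rw [← setIntegral_univ, ← hBcover, integral_iUnion hBmeas hBdisj
      (hBcover ▸ hχint.integrableOn), tsum_fintype]
  have hsum2 : ∫ x, χ x ∂ν - (n:ℝ) * Real.exp (-(n:ℝ))
      ≤ ∑ i, (if ν (B i) = 0 then (0:ℝ)
          else (ν (B i)).toReal * Real.log ((ν (B i)).toReal / (μ (B i)).toReal)) := by
    have h6 : ∑ i, (if i = i₀ then (n:ℝ) * Real.exp (-(n:ℝ)) else 0)
        = (n:ℝ) * Real.exp (-(n:ℝ)) := by
      rw [Finset.sum_ite_eq' Finset.univ i₀ (fun _ => (n:ℝ) * Real.exp (-(n:ℝ)))]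
      simp
    calc ∫ x, χ x ∂ν - (n:ℝ) * Real.exp (-(n:ℝ))
        = ∑ i, ((∫ x in B i, χ x ∂ν) - (if i = i₀ then (n:ℝ) * Real.exp (-(n:ℝ)) else 0)) := by
          rw [Finset.sum_sub_distrib, hsum1, h6]
      _ ≤ _ := Finset.sum_le_sum fun i _ => percell i
  -- compare ∫ χ with the truncated integrals
  have hint_φ : Integrable (fun x => min (max (f x) 0) (n:ℝ)) ν := by
    refine Integrable.mono' (integrable_const (n:ℝ))
      (((hf.max measurable_const).min measurable_const)).aestronglyMeasurable
      (Filter.Eventually.of_forall fun x => ?_)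
    rw [Real.norm_eq_abs, abs_le]
    constructor
    · have := le_min (le_max_right (f x) 0) (by linarith : (0:ℝ) ≤ n)
      linarith
    · exact min_le_right _ _
  have hint_neg : Integrable (fun x => max (-f x) 0) ν := integrable_neg_part hνμ
  have hpt : ∀ x, min (max (f x) 0) (n:ℝ) - max (-f x) 0 - ε ≤ χ x := by
    intro x
    rw [hχ]; simp only
    split
    · exact le_rfl
    · rename_i hcc
      push_neg at hcc
      have h1 : max (f x) 0 = 0 := max_eq_right (by linarith)
      have h2 : min (max (f x) 0) (n:ℝ) = 0 := by rw [h1]; exact min_eq_left (by linarith)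
      have h3 : (0:ℝ) ≤ max (-f x) 0 := le_max_right _ _
      linarith
  have hcmp : (∫ x, min (max (f x) 0) (n:ℝ) ∂ν) - (∫ x, max (-f x) 0 ∂ν) - ε
      ≤ ∫ x, χ x ∂ν := by
    have hAB : Integrable (fun x => min (max (f x) 0) (n:ℝ) - max (-f x) 0) ν :=
      hint_φ.sub hint_neg
    have hABC : Integrable (fun x => min (max (f x) 0) (n:ℝ) - max (-f x) 0 - ε) ν :=
      hAB.sub (integrable_const ε)
    have h7 : ∫ x, (min (max (f x) 0) (n:ℝ) - max (-f x) 0 - ε) ∂ν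
        = (∫ x, min (max (f x) 0) (n:ℝ) ∂ν) - (∫ x, max (-f x) 0 ∂ν) - ε := by
      rw [integral_sub hAB (integrable_const ε), integral_sub hint_φ hint_neg, integral_const]
      simp
    rw [← h7]
    exact integral_mono hABC hχint hpt
  have : ε = (n:ℝ)⁻¹ := hε
  linarith [hsum2, hcmp]

end Core
end Aux

theorem iSup_fdRate_eq_rate_general {α : Type*} [MeasurableSpace α]
    (θ : ℝ) (hθ : 0 < θ)
    (ν₀ μ : Measure α)
    [IsProbabilityMeasure ν₀] [IsProbabilityMeasure μ] :
    (⨆ (r : ℕ) (B : Fin r → Set α)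
        (_ : (∀ i, MeasurableSet (B i)) ∧ Pairwise (Function.onFun Disjoint B) ∧
          (⋃ i, B i) = Set.univ),
        fdRate θ ν₀ μ B) =
      if μ ≪ ν₀ then (θ : EReal) * relEnt ν₀ μ else ⊤ := by
  have hle_iSup : ∀ (r : ℕ) (B : Fin r → Set α),
      ((∀ i, MeasurableSet (B i)) ∧ Pairwise (Function.onFun Disjoint B) ∧
        (⋃ i, B i) = Set.univ) →
      fdRate θ ν₀ μ B ≤ ⨆ (r : ℕ) (B : Fin r → Set α)
        (_ : (∀ i, MeasurableSet (B i)) ∧ Pairwise (Function.onFun Disjoint B) ∧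
          (⋃ i, B i) = Set.univ), fdRate θ ν₀ μ B := by
    intro r B hadm
    exact le_iSup_of_le r (le_iSup_of_le B (le_iSup (fun _ => fdRate θ ν₀ μ B) hadm))
  by_cases hμν : μ ≪ ν₀
  · rw [if_pos hμν]
    by_cases hνμ : ν₀ ≪ μ
    · -- main case
      set f := llr ν₀ μ with hf_def
      have hf : Measurable f := measurable_llr ν₀ μ
      set P := ∫⁻ x, ENNReal.ofReal (f x) ∂ν₀ with hP_def
      -- the truncated lintegrals
      set Q : ℕ → ℝ≥0∞ := fun n => ∫⁻ x, min (ENNReal.ofReal (f x)) (n : ℝ≥0∞) ∂ν₀ with hQ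
      have hQmono : Monotone Q := by
        intro m n hmn
        exact lintegral_mono fun x => min_le_min le_rfl (by exact_mod_cast Nat.cast_le.mpr hmn)
      have hQsup : (⨆ n, Q n) = P := by
        rw [hQ, ← lintegral_iSup
          (fun n => (hf.ennreal_ofReal).min measurable_const)
          (fun m n hmn => fun x => min_le_min le_rfl (by exact_mod_cast Nat.cast_le.mpr hmn))]
        refine lintegral_congr fun x => ?_
        refine le_antisymm (iSup_le fun n => min_le_left _ _) ?_
        obtain ⟨m, hm⟩ :=
          ENNReal.exists_nat_gt (show ENNReal.ofReal (f x) ≠ ⊤ from ENNReal.ofReal_ne_top)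
        exact le_iSup_of_le m (min_eq_left hm.le).ge
      have hQtop : ∀ n : ℕ, Q n ≠ ⊤ := by
        intro n
        have hQle : Q n ≤ (n : ℝ≥0∞) := by
          calc Q n ≤ ∫⁻ _, (n : ℝ≥0∞) ∂ν₀ := lintegral_mono fun x => min_le_right _ _
            _ = n := by simp
        exact fun h => (ENNReal.natCast_ne_top n) (top_le_iff.mp (h ▸ hQle))
      have hIn : ∀ n : ℕ, ∫ x, min (max (f x) 0) (n:ℝ) ∂ν₀ = (Q n).toReal := by
        intro n
        have hnn : (0 : α → ℝ) ≤ᵐ[ν₀] fun x => min (max (f x) 0) (n:ℝ) :=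
          Filter.Eventually.of_forall fun x =>
            le_min (le_max_right _ _) (by positivity)
        rw [integral_eq_lintegral_of_nonneg_ae hnn
          ((hf.max measurable_const).min measurable_const).aestronglyMeasurable]
        congr 1
        refine lintegral_congr fun x => ?_
        have h1 : ENNReal.ofReal (max (f x) 0) = ENNReal.ofReal (f x) := by
          rcases le_total (f x) 0 with h | h
          · rw [max_eq_right h, ENNReal.ofReal_zero, ENNReal.ofReal_of_nonpos h]
          · rw [max_eq_left h]
        rw [(Monotone.map_min (fun _ _ hab => ENNReal.ofReal_le_ofReal hab)
            : ENNReal.ofReal (min (max (f x) 0) (n:ℝ))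
              = min (ENNReal.ofReal (max (f x) 0)) (ENNReal.ofReal (n:ℝ))),
          h1, ENNReal.ofReal_natCast]
      -- real negative part
      set Nr : ℝ := ∫ x, max (-f x) 0 ∂ν₀ with hNr
      -- lower bound for the sup, for every n ≥ 1
      have hSlow : ∀ n : ℕ, 1 ≤ n →
          ((θ * ((Q n).toReal - Nr - (n:ℝ)⁻¹ - n * Real.exp (-(n:ℝ))) : ℝ) : EReal)
            ≤ ⨆ (r : ℕ) (B : Fin r → Set α)
              (_ : (∀ i, MeasurableSet (B i)) ∧ Pairwise (Function.onFun Disjoint B) ∧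
                (⋃ i, B i) = Set.univ), fdRate θ ν₀ μ B := by
        intro n hn
        obtain ⟨r, B, hm, hd, hc, hsum⟩ := key_lower hμν hνμ n hn
        refine le_trans ?_ (hle_iSup r B ⟨hm, hd, hc⟩)
        rw [fdRate_eq θ hμν hνμ B, EReal.coe_le_coe_iff]
        rw [hIn n] at hsum
        exact mul_le_mul_of_nonneg_left (by linarith) hθ.le
      by_cases hP : P = ⊤
      · rw [relEnt_eq_top hνμ hP, EReal.coe_mul_top_of_pos hθ]
        refine le_antisymm le_top (le_of_forall_lt fun c hc => ?_)
        induction c using EReal.rec with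
        | top => exact absurd hc (lt_irrefl _)
        | bot =>
          refine lt_of_lt_of_le (EReal.bot_lt_coe _) (hSlow 1 le_rfl)
        | coe c =>
          -- pick n with Q n large
          set R : ℝ := max 0 (c / θ + Nr + 2) with hR
          have : ENNReal.ofReal R < ⨆ n, Q n := by
            rw [hQsup, hP]; exact ENNReal.ofReal_lt_top.trans_le le_top
          obtain ⟨m, hm⟩ := lt_iSup_iff.mp this
          set n := max m 1 with hn
          have hn1 : 1 ≤ n := le_max_right _ _
          have hQn : ENNReal.ofReal R < Q n := hm.trans_le (hQmono (le_max_left _ _))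
          have hQR : R < (Q n).toReal := by
            rwa [ENNReal.ofReal_lt_iff_lt_toReal (le_max_left 0 _) (hQtop n)] at hQn
          have hnR : (1:ℝ) ≤ (n:ℝ) := by exact_mod_cast hn1
          have hexp : (n:ℝ) * Real.exp (-(n:ℝ)) ≤ 1 := by
            rw [Real.exp_neg]
            rw [mul_inv_le_iff₀ (Real.exp_pos _)]
            have := Real.add_one_le_exp (n:ℝ)
            linarith
          have hinv : (n:ℝ)⁻¹ ≤ 1 := inv_le_one_of_one_le₀ hnR
          have hclt : c < θ * ((Q n).toReal - Nr - (n:ℝ)⁻¹ - n * Real.exp (-(n:ℝ))) := by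
            have h2 : c / θ + Nr + 2 ≤ R := le_max_right _ _
            have h3 : c / θ < (Q n).toReal - Nr - 2 := by linarith
            have h4 : c < θ * ((Q n).toReal - Nr - 2) := by
              rw [div_lt_iff₀ hθ] at h3; linarith [h3]
            have h5 : θ * ((Q n).toReal - Nr - 2)
                ≤ θ * ((Q n).toReal - Nr - (n:ℝ)⁻¹ - n * Real.exp (-(n:ℝ))) := by
              apply mul_le_mul_of_nonneg_left _ hθ.le
              linarith
            linarith
          calc ((c:ℝ) : EReal) < ((θ * ((Q n).toReal - Nr - (n:ℝ)⁻¹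
                - n * Real.exp (-(n:ℝ))) : ℝ) : EReal) := by exact_mod_cast hclt
            _ ≤ _ := hSlow n hn1
      · -- integrable case
        have hInt : Integrable f ν₀ := integrable_llr_of hνμ hP
        rw [relEnt_eq_int hνμ hP, ← EReal.coe_mul]
        have hub : (⨆ (r : ℕ) (B : Fin r → Set α)
            (_ : (∀ i, MeasurableSet (B i)) ∧ Pairwise (Function.onFun Disjoint B) ∧
              (⋃ i, B i) = Set.univ), fdRate θ ν₀ μ B)
            ≤ ((θ * ∫ x, f x ∂ν₀ : ℝ) : EReal) := by
          refine iSup_le fun r => iSup_le fun B => iSup_le fun hadm => ?_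
          exact fdRate_le θ hθ.le hμν hνμ hInt B hadm.1 hadm.2.1 hadm.2.2
        refine le_antisymm hub (le_of_forall_lt fun c hc => ?_)
        -- convergence of the lower bounds
        have hNint : ∫ x, llr ν₀ μ x ∂ν₀
            = (P).toReal - (∫⁻ x, ENNReal.ofReal (-f x) ∂ν₀).toReal :=
          integral_eq_lintegral_pos_part_sub_lintegral_neg_part hInt
        have hNrEq : Nr = (∫⁻ x, ENNReal.ofReal (-f x) ∂ν₀).toReal := by
          have h0 : (0 : α → ℝ) ≤ᵐ[ν₀] fun x => max (-f x) 0 :=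
            Filter.Eventually.of_forall fun x => le_max_right _ _
          rw [hNr, integral_eq_lintegral_of_nonneg_ae h0
            (hf.neg.max measurable_const).aestronglyMeasurable]
          congr 1
          refine lintegral_congr fun x => ?_
          rcases le_total (-f x) 0 with h | h
          · rw [max_eq_right h, ENNReal.ofReal_zero, ENNReal.ofReal_of_nonpos h]
          · rw [max_eq_left h]
        have htendQ : Filter.Tendsto (fun n => (Q n).toReal) Filter.atTop (nhds P.toReal) :=
          (ENNReal.tendsto_toReal hP).comp (hQsup ▸ tendsto_atTop_iSup hQmono)
        have htend3 : Filter.Tendsto (fun n : ℕ => (n:ℝ) * Real.exp (-(n:ℝ)))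
            Filter.atTop (nhds 0) := by
          have := (tendsto_pow_mul_exp_neg_atTop_nhds_zero 1).comp
            (tendsto_natCast_atTop_atTop (R := ℝ))
          simpa [Function.comp_def] using this
        have htendb : Filter.Tendsto
            (fun n : ℕ => θ * ((Q n).toReal - Nr - (n:ℝ)⁻¹ - n * Real.exp (-(n:ℝ))))
            Filter.atTop (nhds (θ * ∫ x, f x ∂ν₀)) := by
          have h0 : (θ * ∫ x, f x ∂ν₀) = θ * (P.toReal - Nr - 0 - 0) := by
            rw [hNint, hNrEq]; ring
          rw [h0]
          exact (((htendQ.sub tendsto_const_nhds).sub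
            tendsto_inv_atTop_nhds_zero_nat).sub htend3).const_mul θ
        induction c using EReal.rec with
        | top => exact absurd (hc.trans (EReal.coe_lt_top _)) (lt_irrefl _)
        | bot => exact lt_of_lt_of_le (EReal.bot_lt_coe _) (hSlow 1 le_rfl)
        | coe c =>
          have hclt : c < θ * ∫ x, f x ∂ν₀ := by exact_mod_cast hc
          have hev := (htendb.eventually (lt_mem_nhds hclt)).and
            (Filter.eventually_ge_atTop 1)
          obtain ⟨n, hn1, hn2⟩ := hev.exists
          calc ((c:ℝ):EReal) < ((θ * ((Q n).toReal - Nr - (n:ℝ)⁻¹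
              - n * Real.exp (-(n:ℝ))) : ℝ) : EReal) := by exact_mod_cast hn1
            _ ≤ _ := hSlow n hn2
    · -- μ ≪ ν₀ but ¬ ν₀ ≪ μ
      have hRE : relEnt ν₀ μ = ⊤ := by rw [relEnt, if_neg hνμ]
      rw [hRE, EReal.coe_mul_top_of_pos hθ]
      obtain ⟨s, hs0, hsne⟩ : ∃ s, μ s = 0 ∧ ν₀ s ≠ 0 := by
        by_contra h
        push_neg at h
        exact hνμ (Measure.AbsolutelyContinuous.mk fun t _ ht => h t ht)
      set t := toMeasurable μ s with ht_def
      have htm : MeasurableSet t := measurableSet_toMeasurable μ s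
      have hμt : μ t = 0 := by rw [ht_def, measure_toMeasurable]; exact hs0
      have hνt : ν₀ t ≠ 0 := fun h =>
        hsne (le_antisymm (h ▸ measure_mono (subset_toMeasurable μ s)) zero_le)
      have htop : fdRate θ ν₀ μ ![t, tᶜ] = ⊤ := by
        rw [fdRate]
        by_cases hcond : ∀ i, 0 < μ (![t, tᶜ] i) → 0 < ν₀ (![t, tᶜ] i)
        · rw [if_pos hcond, Fin.sum_univ_two]
          simp only [Matrix.cons_val_zero, Matrix.cons_val_one, Matrix.head_cons]
          simp only [hνt, hμt, if_false, if_true]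
          have h1 : (if ν₀ tᶜ = 0 then (0:EReal) else if μ tᶜ = 0 then (⊤:EReal)
              else (((ν₀ tᶜ).toReal * Real.log ((ν₀ tᶜ).toReal / (μ tᶜ).toReal) : ℝ) : EReal))
              ≠ ⊥ := by
            split_ifs
            · simp
            · simp
            · exact EReal.coe_ne_bot _
          convert EReal.coe_mul_top_of_pos hθ using 2
          exact EReal.top_add_of_ne_bot h1
        · rw [if_neg hcond]
      refine le_antisymm le_top ?_
      rw [← htop]
      exact hle_iSup 2 ![t, tᶜ] (pair_admissible htm)
  · -- ¬ μ ≪ ν₀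
    rw [if_neg hμν]
    obtain ⟨s, hs0, hsne⟩ : ∃ s, ν₀ s = 0 ∧ μ s ≠ 0 := by
      by_contra h
      push_neg at h
      exact hμν (Measure.AbsolutelyContinuous.mk fun t _ ht => h t ht)
    set t := toMeasurable ν₀ s with ht_def
    have htm : MeasurableSet t := measurableSet_toMeasurable ν₀ s
    have hνt : ν₀ t = 0 := by rw [ht_def, measure_toMeasurable]; exact hs0
    have hμt : μ t ≠ 0 := fun h =>
      hsne (le_antisymm (h ▸ measure_mono (subset_toMeasurable ν₀ s)) zero_le)
    have htop : fdRate θ ν₀ μ ![t, tᶜ] = ⊤ := by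
      rw [fdRate, if_neg]
      intro hcond
      have := hcond 0 (pos_iff_ne_zero.mpr hμt)
      rw [show (![t, tᶜ] 0) = t from rfl, hνt] at this
      exact lt_irrefl _ this
    refine le_antisymm le_top ?_
    rw [← htop]
    exact hle_iSup 2 ![t, tᶜ] (pair_admissible htm)

/-- the supremum, over all finite Borel partitions `j` of `[0,1]`, of the
finite-dimensional rate functions `I^θ_{π_j(ν₀)}(π_j(μ))` equals
`I^θ_{ν₀}(μ) = θ H(ν₀|μ)` if `μ ≪ ν₀` and `+∞` otherwise. -/
theorem iSup_fdRate_eq_rate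
    (θ : ℝ) (hθ : 0 < θ)
    (ν₀ μ : Measure (Set.Icc (0:ℝ) 1))
    [IsProbabilityMeasure ν₀] [IsProbabilityMeasure μ] :
    (⨆ (r : ℕ) (B : Fin r → Set (Set.Icc (0:ℝ) 1))
        (_ : (∀ i, MeasurableSet (B i)) ∧ Pairwise (Function.onFun Disjoint B) ∧
          (⋃ i, B i) = Set.univ),
        fdRate θ ν₀ μ B) =
      if μ ≪ ν₀ then (θ : EReal) * relEnt ν₀ μ else ⊤ :=
  iSup_fdRate_eq_rate_general θ hθ ν₀ μ
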